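/- Let C be a countable set, and let (X^n)_{n∈ℕ} and X be random variables with values in ℓ¹(C). Assume that (i) the finite-dimensional distributions of X^n converge to those of X, i.e., for every finite subset F ⊆ C the random vector (X^n_i)_{i∈F} converges in distribution to (X_i)_{i∈F}; and (ii) there exists u ∈ ℓ¹(C) such that for every n and every i ∈ C, E(|X^n_i|) ≤ u_i. Then X^n converges in distribution to X in the norm topology of ℓ¹(C). -/

import Mathlib

open MeasureTheory Filter Topology
open scoped ENNReal BoundedContinuousFunction
open Metric
open scoped NNReal

section Stmt15Aux

variable {C : Type*} [DecidableEq C] [Countable C]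
  [MeasurableSpace (lp (fun _ : C => ℝ) 1)] [BorelSpace (lp (fun _ : C => ℝ) 1)]

set_option linter.unusedSectionVars false

lemma aux_hasSum_abs (x : lp (fun _ : C => ℝ) 1) : HasSum (fun i => |x i|) ‖x‖ := by
  have h := lp.hasSum_norm (p := 1) (by norm_num) x
  simpa using h

lemma aux_eval_continuous (i : C) : Continuous (fun x : lp (fun _ : C => ℝ) 1 => x i) := by
  apply LipschitzWith.continuous (K := 1)
  apply LipschitzWith.of_dist_le_mul
  intro x y
  have h := lp.norm_apply_le_norm (E := fun _ : C => ℝ) (p := 1) one_ne_zero (x - y) i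
  simpa [dist_eq_norm, lp.coeFn_sub, Pi.sub_apply] using h

noncomputable def aux_emb (F : Finset C) (v : ↥F → ℝ) : lp (fun _ : C => ℝ) 1 :=
  ∑ i ∈ F.attach, lp.single 1 (i : C) (v i)

lemma aux_emb_apply (F : Finset C) (v : ↥F → ℝ) (j : C) :
    aux_emb F v j = if h : j ∈ F then v ⟨j, h⟩ else 0 := by
  simp only [aux_emb, lp.coeFn_sum, Finset.sum_apply]
  by_cases h : j ∈ F
  · rw [Finset.sum_eq_single (⟨j, h⟩ : ↥F)]
    · rw [dif_pos h]
      exact lp.single_apply_self (E := fun _ : C => ℝ) 1 j (v ⟨j, h⟩)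
    · intro b _ hb
      exact lp.single_apply_ne 1 (b : C) _ (fun hj => hb (by ext; exact hj.symm))
    · simp
  · rw [Finset.sum_eq_zero, dif_neg h]
    intro b _
    exact lp.single_apply_ne 1 (b : C) _ (fun hj => h (hj ▸ b.2))

lemma aux_single_lipschitz (i : C) :
    LipschitzWith 1 (fun a : ℝ => lp.single (E := fun _ : C => ℝ) 1 i a) := by
  apply LipschitzWith.of_dist_le_mul
  intro a b
  have hsub : lp.single (E := fun _ : C => ℝ) 1 i a - lp.single 1 i b
      = lp.single 1 i ((fun _ : C => a - b) i) := by
    ext j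
    by_cases h : j = i
    · subst h; simp [lp.coeFn_sub, lp.single_apply_self]
    · simp [lp.coeFn_sub, lp.single_apply_ne 1 i _ h]
  have hns := lp.norm_single (E := fun _ : C => ℝ) (p := 1) (by norm_num) i ((fun _ : C => a - b) i)
  rw [dist_eq_norm, hsub, hns]
  simp [Real.dist_eq, abs_sub_comm]

lemma aux_emb_continuous (F : Finset C) : Continuous (aux_emb F) := by
  apply continuous_finset_sum
  intro i _
  exact (aux_single_lipschitz (i : C)).continuous.comp (continuous_apply i)

noncomputable def aux_trunc (F : Finset C) (x : lp (fun _ : C => ℝ) 1) : lp (fun _ : C => ℝ) 1 :=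
  aux_emb F (fun i => x (i : C))

lemma aux_trunc_continuous (F : Finset C) : Continuous (aux_trunc F) := by
  apply (aux_emb_continuous F).comp
  apply continuous_pi
  intro i
  have h := lp.norm_apply_le_norm (E := fun _ : C => ℝ) (p := 1) one_ne_zero
  apply LipschitzWith.continuous (K := 1)
  apply LipschitzWith.of_dist_le_mul
  intro x y
  simpa [dist_eq_norm, lp.coeFn_sub, Pi.sub_apply] using h (x - y) (i : C)

lemma aux_sub_trunc_apply (F : Finset C) (x : lp (fun _ : C => ℝ) 1) (j : C) :
    (x - aux_trunc F x) j = if j ∈ F then 0 else x j := by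
  rw [lp.coeFn_sub, Pi.sub_apply, aux_trunc, aux_emb_apply]
  by_cases h : j ∈ F <;> simp [h]

lemma aux_tail (F : Finset C) (x : lp (fun _ : C => ℝ) 1) :
    ENNReal.ofReal ‖x - aux_trunc F x‖
      = ∑' (i : ↑{j : C | j ∉ F}), ENNReal.ofReal |x (i : C)| := by
  set y := x - aux_trunc F x with hy
  have hsum : HasSum (fun j => |y j|) ‖y‖ := aux_hasSum_abs y
  have h1 : ENNReal.ofReal ‖y‖ = ∑' j, ENNReal.ofReal |y j| := by
    rw [← hsum.tsum_eq]
    exact ENNReal.ofReal_tsum_of_nonneg (fun j => abs_nonneg _) hsum.summable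
  have h2 : ∑' (i : ↑{j : C | j ∉ F}), ENNReal.ofReal |y (i : C)| = ∑' j, ENNReal.ofReal |y j| := by
    apply tsum_subtype_eq_of_support_subset (f := fun j : C => ENNReal.ofReal |y j|) (s := {j : C | j ∉ F})
    intro j hj
    simp only [Function.mem_support, ne_eq] at hj
    intro hjF
    apply hj
    rw [aux_sub_trunc_apply F x j, if_pos hjF]
    simp
  rw [h1, ← h2]
  congr 1
  ext i
  rw [aux_sub_trunc_apply F x (i : C), if_neg i.2]

lemma aux_stepA [Countable C]
    [MeasurableSpace (lp (fun _ : C => ℝ) 1)] [BorelSpace (lp (fun _ : C => ℝ) 1)]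
    (μ : ℕ → Measure (lp (fun _ : C => ℝ) 1)) (ν : Measure (lp (fun _ : C => ℝ) 1))
    [∀ n, IsProbabilityMeasure (μ n)] [IsProbabilityMeasure ν]
    (hfdd : ∀ F : Finset C, ∀ g : (↥F → ℝ) →ᵇ ℝ,
      Tendsto (fun n => ∫ x, g (fun i : ↥F => x (i : C)) ∂μ n) atTop
        (𝓝 (∫ x, g (fun i : ↥F => x (i : C)) ∂ν)))
    (u : C → ℝ)
    (hW : ∑' i, ENNReal.ofReal (u i) ≠ ⊤)
    (hdomμ : ∀ n i, ∫⁻ x, ENNReal.ofReal |x i| ∂(μ n) ≤ ENNReal.ofReal (u i))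
    (hdomν : ∀ i, ∫⁻ x, ENNReal.ofReal |x i| ∂ν ≤ ENNReal.ofReal (u i))
    (f : lp (fun _ : C => ℝ) 1 →ᵇ ℝ) (K : ℝ≥0) (hK : LipschitzWith K ⇑f) :
    Tendsto (fun n => ∫ x, f x ∂(μ n)) atTop (𝓝 (∫ x, f x ∂ν)) := by
  rw [Metric.tendsto_atTop]
  intro ε hε
  set δ := ε / 3 with hδdef
  have hδ : 0 < δ := by positivity
  have hKpos : (0:ℝ) < (K : ℝ) + 1 := by positivity
  have hδK : 0 < δ / ((K : ℝ) + 1) := by positivity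
  -- choose the finite set F
  have htail := ENNReal.tendsto_tsum_compl_atTop_zero (f := fun i : C => ENNReal.ofReal (u i)) hW
  have hex : ∃ F : Finset C,
      ∑' i : {x : C // x ∉ F}, ENNReal.ofReal (u ↑i) < ENNReal.ofReal (δ / ((K : ℝ) + 1)) := by
    have := (tendsto_order.1 htail).2 _ (ENNReal.ofReal_pos.mpr hδK)
    exact this.exists
  obtain ⟨F, hF⟩ := hex
  -- the truncation as a continuous map and the composed BCF
  set T : C(lp (fun _ : C => ℝ) 1, lp (fun _ : C => ℝ) 1) :=
    ⟨aux_trunc F, aux_trunc_continuous F⟩ with hT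
  -- key uniform bound
  have key : ∀ (m : Measure (lp (fun _ : C => ℝ) 1)), IsProbabilityMeasure m →
      (∀ i, ∫⁻ x, ENNReal.ofReal |x i| ∂m ≤ ENNReal.ofReal (u i)) →
      |(∫ x, f x ∂m) - ∫ x, f (aux_trunc F x) ∂m| ≤ δ := by
    intro m hm hdm
    have hint1 : Integrable (fun x => f x) m := f.integrable m
    have hint2 : Integrable (fun x => f (aux_trunc F x)) m := (f.compContinuous T).integrable m
    have habs : |(∫ x, f x ∂m) - ∫ x, f (aux_trunc F x) ∂m|
        ≤ ∫ x, |f x - f (aux_trunc F x)| ∂m := by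
      rw [← integral_sub hint1 hint2]
      simpa [Real.norm_eq_abs] using
        norm_integral_le_integral_norm (μ := m) (fun x => f x - f (aux_trunc F x))
    have hmeas_diff : AEStronglyMeasurable (fun x => |f x - f (aux_trunc F x)|) m :=
      (hint1.sub hint2).abs.aestronglyMeasurable
    have heq : ∫ x, |f x - f (aux_trunc F x)| ∂m
        = (∫⁻ x, ENNReal.ofReal |f x - f (aux_trunc F x)| ∂m).toReal := by
      rw [integral_eq_lintegral_of_nonneg_ae (Filter.Eventually.of_forall fun x => abs_nonneg _)
        hmeas_diff]
    have hlin : ∫⁻ x, ENNReal.ofReal |f x - f (aux_trunc F x)| ∂m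
        ≤ (K : ℝ≥0∞) * ENNReal.ofReal (δ / ((K : ℝ) + 1)) := by
      have step1 : ∫⁻ x, ENNReal.ofReal |f x - f (aux_trunc F x)| ∂m
          ≤ ∫⁻ x, (K : ℝ≥0∞) * ENNReal.ofReal ‖x - aux_trunc F x‖ ∂m := by
        apply lintegral_mono
        intro x
        have hd : |f x - f (aux_trunc F x)| ≤ (K : ℝ) * ‖x - aux_trunc F x‖ := by
          have := hK.dist_le_mul x (aux_trunc F x)
          rwa [Real.dist_eq, dist_eq_norm] at this
        calc ENNReal.ofReal |f x - f (aux_trunc F x)|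
            ≤ ENNReal.ofReal ((K : ℝ) * ‖x - aux_trunc F x‖) := ENNReal.ofReal_le_ofReal hd
          _ = (K : ℝ≥0∞) * ENNReal.ofReal ‖x - aux_trunc F x‖ := by
              rw [ENNReal.ofReal_mul K.coe_nonneg, ENNReal.ofReal_coe_nnreal]
      have hmeasnorm : Measurable (fun x : lp (fun _ : C => ℝ) 1 =>
          ENNReal.ofReal ‖x - aux_trunc F x‖) := by
        apply ENNReal.measurable_ofReal.comp
        exact (continuous_norm.comp ((continuous_id.sub (aux_trunc_continuous F)))).measurable
      have step2 : ∫⁻ x, (K : ℝ≥0∞) * ENNReal.ofReal ‖x - aux_trunc F x‖ ∂m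
          = (K : ℝ≥0∞) * ∫⁻ x, ENNReal.ofReal ‖x - aux_trunc F x‖ ∂m :=
        lintegral_const_mul _ hmeasnorm
      have step3 : ∫⁻ x, ENNReal.ofReal ‖x - aux_trunc F x‖ ∂m
          ≤ ENNReal.ofReal (δ / ((K : ℝ) + 1)) := by
        have e1 : ∫⁻ x, ENNReal.ofReal ‖x - aux_trunc F x‖ ∂m
            = ∑' (i : ↑{j : C | j ∉ F}), ∫⁻ x, ENNReal.ofReal |x (i : C)| ∂m := by
          rw [lintegral_congr (aux_tail F)]
          exact lintegral_tsum fun i =>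
            (ENNReal.measurable_ofReal.comp
              ((continuous_abs.comp (aux_eval_continuous (i : C))).measurable)).aemeasurable
        rw [e1]
        calc ∑' (i : ↑{j : C | j ∉ F}), ∫⁻ x, ENNReal.ofReal |x (i : C)| ∂m
            ≤ ∑' (i : ↑{j : C | j ∉ F}), ENNReal.ofReal (u (i : C)) :=
              ENNReal.tsum_le_tsum fun i => hdm (i : C)
          _ ≤ ENNReal.ofReal (δ / ((K : ℝ) + 1)) := hF.le
      calc ∫⁻ x, ENNReal.ofReal |f x - f (aux_trunc F x)| ∂m
          ≤ ∫⁻ x, (K : ℝ≥0∞) * ENNReal.ofReal ‖x - aux_trunc F x‖ ∂m := step1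
        _ = (K : ℝ≥0∞) * ∫⁻ x, ENNReal.ofReal ‖x - aux_trunc F x‖ ∂m := step2
        _ ≤ (K : ℝ≥0∞) * ENNReal.ofReal (δ / ((K : ℝ) + 1)) := by
            exact mul_le_mul' le_rfl step3
    have hne : (K : ℝ≥0∞) * ENNReal.ofReal (δ / ((K : ℝ) + 1)) ≠ ⊤ :=
      ENNReal.mul_ne_top ENNReal.coe_ne_top ENNReal.ofReal_ne_top
    have : (∫⁻ x, ENNReal.ofReal |f x - f (aux_trunc F x)| ∂m).toReal
        ≤ ((K : ℝ≥0∞) * ENNReal.ofReal (δ / ((K : ℝ) + 1))).toReal :=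
      ENNReal.toReal_mono hne hlin
    have hcomp : ((K : ℝ≥0∞) * ENNReal.ofReal (δ / ((K : ℝ) + 1))).toReal
        = (K : ℝ) * (δ / ((K : ℝ) + 1)) := by
      rw [ENNReal.toReal_mul, ENNReal.coe_toReal, ENNReal.toReal_ofReal hδK.le]
    have hfinal : (K : ℝ) * (δ / ((K : ℝ) + 1)) ≤ δ := by
      rw [mul_div_assoc'] at *
      rw [div_le_iff₀ hKpos]
      nlinarith [hδ.le, K.coe_nonneg]
    calc |(∫ x, f x ∂m) - ∫ x, f (aux_trunc F x) ∂m|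
        ≤ ∫ x, |f x - f (aux_trunc F x)| ∂m := habs
      _ = (∫⁻ x, ENNReal.ofReal |f x - f (aux_trunc F x)| ∂m).toReal := heq
      _ ≤ ((K : ℝ≥0∞) * ENNReal.ofReal (δ / ((K : ℝ) + 1))).toReal := this
      _ = (K : ℝ) * (δ / ((K : ℝ) + 1)) := hcomp
      _ ≤ δ := hfinal
  -- middle term
  set g : (↥F → ℝ) →ᵇ ℝ := f.compContinuous ⟨aux_emb F, aux_emb_continuous F⟩ with hg
  have hgid : ∀ x : lp (fun _ : C => ℝ) 1, g (fun i : ↥F => x (i : C)) = f (aux_trunc F x) :=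
    fun x => rfl
  have hmid := hfdd F g
  simp only [hgid] at hmid
  rw [Metric.tendsto_atTop] at hmid
  obtain ⟨N, hN⟩ := hmid δ hδ
  refine ⟨N, fun n hn => ?_⟩
  have h1 := key (μ n) inferInstance (hdomμ n)
  have h3 := key ν inferInstance hdomν
  have h2 := hN n hn
  have tri := dist_triangle4 (∫ x, f x ∂(μ n)) (∫ x, f (aux_trunc F x) ∂(μ n))
    (∫ x, f (aux_trunc F x) ∂ν) (∫ x, f x ∂ν)
  simp only [Real.dist_eq] at tri h2 ⊢
  calc |(∫ x, f x ∂(μ n)) - ∫ x, f x ∂ν| ≤ _ := tri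
    _ < δ + δ + δ := by
        apply add_lt_add_of_lt_of_le
        apply add_lt_add_of_le_of_lt h1 h2
        rw [abs_sub_comm]; exact h3
    _ = ε := by rw [hδdef]; ring

lemma aux_stepB
    (μ : ℕ → Measure (lp (fun _ : C => ℝ) 1)) (ν : Measure (lp (fun _ : C => ℝ) 1))
    [∀ n, IsProbabilityMeasure (μ n)] [IsProbabilityMeasure ν]
    (hfdd : ∀ F : Finset C, ∀ g : (↥F → ℝ) →ᵇ ℝ,
      Tendsto (fun n => ∫ x, g (fun i : ↥F => x (i : C)) ∂μ n) atTop
        (𝓝 (∫ x, g (fun i : ↥F => x (i : C)) ∂ν)))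
    (u : C → ℝ)
    (hW : ∑' i, ENNReal.ofReal (u i) ≠ ⊤)
    (hdomμ : ∀ n i, ∫⁻ x, ENNReal.ofReal |x i| ∂(μ n) ≤ ENNReal.ofReal (u i))
    (hdomν : ∀ i, ∫⁻ x, ENNReal.ofReal |x i| ∂ν ≤ ENNReal.ofReal (u i))
    (S : Set (lp (fun _ : C => ℝ) 1)) (hS : IsClosed S) :
    atTop.limsup (fun n => μ n S) ≤ ν S := by
  rcases S.eq_empty_or_nonempty with rfl | hne
  · simp
  have key : ∀ δ : ℝ, 0 < δ →
      atTop.limsup (fun n => μ n S) ≤ ν (Metric.cthickening δ S) := by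
    intro δ hδ
    set gf : lp (fun _ : C => ℝ) 1 → ℝ := fun x => max (1 - infDist x S / δ) 0 with hgf
    have gf_cont : Continuous gf :=
      ((continuous_const.sub ((continuous_infDist_pt S).div_const δ)).max continuous_const)
    have gf_nonneg : ∀ x, 0 ≤ gf x := fun x => le_max_right _ _
    have gf_le_one : ∀ x, gf x ≤ 1 := by
      intro x
      apply max_le _ zero_le_one
      have h1 : 0 ≤ infDist x S / δ := div_nonneg (infDist_nonneg) hδ.le
      linarith
    have gf_lip : LipschitzWith (δ⁻¹.toNNReal) gf := by
      apply LipschitzWith.of_dist_le_mul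
      intro x y
      have h1 : dist (gf x) (gf y)
          ≤ |(1 - infDist x S / δ) - (1 - infDist y S / δ)| := by
        rw [Real.dist_eq]
        exact abs_max_sub_max_le_abs _ _ _
      have h2 : |(1 - infDist x S / δ) - (1 - infDist y S / δ)|
          = |infDist y S - infDist x S| / δ := by
        rw [← abs_of_pos hδ, ← abs_div]
        congr 1
        rw [abs_of_pos hδ]
        field_simp
        ring
      have h3 : |infDist y S - infDist x S| ≤ dist x y := by
        have := (lipschitz_infDist_pt S).dist_le_mul y x
        rwa [NNReal.coe_one, one_mul, Real.dist_eq, dist_comm y x] at this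
      have h4 : Real.toNNReal δ⁻¹ * dist x y = dist x y / δ := by
        rw [Real.coe_toNNReal _ (by positivity)]
        field_simp
      rw [h4]
      calc dist (gf x) (gf y) ≤ |infDist y S - infDist x S| / δ := h1.trans h2.le
        _ ≤ dist x y / δ := by gcongr
    set g : lp (fun _ : C => ℝ) 1 →ᵇ ℝ :=
      BoundedContinuousFunction.mkOfBound ⟨gf, gf_cont⟩ 1
        (fun x y => by
          simp only [ContinuousMap.coe_mk, Real.dist_eq]
          have := gf_nonneg x; have := gf_le_one x
          have := gf_nonneg y; have := gf_le_one y
          rw [abs_le]; constructor <;> linarith) with hgdef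
    have hgcoe : ∀ x, g x = gf x := fun x => rfl
    have hten := aux_stepA μ ν hfdd u hW hdomμ hdomν g δ⁻¹.toNNReal gf_lip
    have hint : ∀ (m : Measure (lp (fun _ : C => ℝ) 1)) [IsProbabilityMeasure m],
        ENNReal.ofReal (∫ x, g x ∂m) = ∫⁻ x, ENNReal.ofReal (gf x) ∂m := by
      intro m _
      exact ofReal_integral_eq_lintegral_ofReal (g.integrable m)
        (Filter.Eventually.of_forall gf_nonneg)
    have hlim : Tendsto (fun n => ∫⁻ x, ENNReal.ofReal (gf x) ∂μ n) atTop
        (𝓝 (∫⁻ x, ENNReal.ofReal (gf x) ∂ν)) := by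
      have := (ENNReal.continuous_ofReal.tendsto _).comp hten
      simp only [Function.comp_def] at this
      simpa only [hint (μ _), hint ν] using this
    have h1 : ∀ n, μ n S ≤ ∫⁻ x, ENNReal.ofReal (gf x) ∂μ n := by
      intro n
      rw [← lintegral_indicator_one hS.measurableSet]
      apply lintegral_mono
      intro x
      by_cases hx : x ∈ S
      · have : gf x = 1 := by
          simp only [hgf]
          rw [infDist_zero_of_mem hx]
          norm_num
        simp [Set.indicator_of_mem hx, this]
      · simp [Set.indicator_of_notMem hx]
    have h2 : ∫⁻ x, ENNReal.ofReal (gf x) ∂ν ≤ ν (Metric.cthickening δ S) := by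
      rw [← lintegral_indicator_one (Metric.isClosed_cthickening).measurableSet]
      apply lintegral_mono
      intro x
      by_cases hx : x ∈ Metric.cthickening δ S
      · rw [Set.indicator_of_mem hx]
        simp only [Pi.one_apply]
        calc ENNReal.ofReal (gf x) ≤ ENNReal.ofReal 1 :=
              ENNReal.ofReal_le_ofReal (gf_le_one x)
          _ = 1 := ENNReal.ofReal_one
      · rw [Set.indicator_of_notMem hx]
        have hlt : δ < infDist x S := by
          rw [Metric.mem_cthickening_iff] at hx
          push_neg at hx
          have hne' : EMetric.infEdist x S ≠ ⊤ := Metric.infEdist_ne_top hne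
          have := ENNReal.toReal_strict_mono hne' hx
          rwa [ENNReal.toReal_ofReal hδ.le] at this
        have : gf x = 0 := by
          simp only [hgf]
          apply max_eq_right
          have : 1 < infDist x S / δ := (one_lt_div hδ).mpr hlt
          linarith
        simp [this]
    calc atTop.limsup (fun n => μ n S)
        ≤ atTop.limsup (fun n => ∫⁻ x, ENNReal.ofReal (gf x) ∂μ n) :=
          limsup_le_limsup (Filter.Eventually.of_forall h1)
      _ = ∫⁻ x, ENNReal.ofReal (gf x) ∂ν := hlim.limsup_eq
      _ ≤ ν (Metric.cthickening δ S) := h2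
  have hth : Tendsto (fun m : ℕ => ν (Metric.cthickening (1 / ((m : ℝ) + 1)) S)) atTop
      (𝓝 (ν S)) := by
    have h0 : Tendsto (fun m : ℕ => 1 / ((m : ℝ) + 1)) atTop (𝓝 0) :=
      tendsto_one_div_add_atTop_nhds_zero_nat
    exact (tendsto_measure_cthickening_of_isClosed
      ⟨1, zero_lt_one, measure_ne_top ν _⟩ hS).comp h0
  exact ge_of_tendsto hth (Filter.Eventually.of_forall fun m => key (1 / ((m : ℝ) + 1)) (by positivity))

-- derivation of the domination for the limit measure
lemma aux_domY
    (μ : ℕ → Measure (lp (fun _ : C => ℝ) 1)) (ν : Measure (lp (fun _ : C => ℝ) 1))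
    [∀ n, IsProbabilityMeasure (μ n)] [IsProbabilityMeasure ν]
    (hfdd : ∀ F : Finset C, ∀ g : (↥F → ℝ) →ᵇ ℝ,
      Tendsto (fun n => ∫ x, g (fun i : ↥F => x (i : C)) ∂μ n) atTop
        (𝓝 (∫ x, g (fun i : ↥F => x (i : C)) ∂ν)))
    (u : C → ℝ)
    (hdomμ : ∀ n i, ∫⁻ x, ENNReal.ofReal |x i| ∂(μ n) ≤ ENNReal.ofReal (u i))
    (i : C) : ∫⁻ x, ENNReal.ofReal |x i| ∂ν ≤ ENNReal.ofReal (u i) := by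
  have hmeas : Measurable (fun x : lp (fun _ : C => ℝ) 1 => |x i|) :=
    (continuous_abs.comp (aux_eval_continuous i)).measurable
  have key : ∀ M : ℕ, ∫⁻ x, ENNReal.ofReal (min |x i| M) ∂ν ≤ ENNReal.ofReal (u i) := by
    intro M
    set F : Finset C := {i} with hF
    have himem : i ∈ F := Finset.mem_singleton_self i
    set φf : (↥F → ℝ) → ℝ := fun v => min |v ⟨i, himem⟩| M with hφf
    have φcont : Continuous φf :=
      ((continuous_abs.comp (continuous_apply _)).min continuous_const)
    have φ01 : ∀ v, 0 ≤ φf v ∧ φf v ≤ M := by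
      intro v
      constructor
      · exact le_min (abs_nonneg _) (Nat.cast_nonneg M)
      · exact min_le_right _ _
    set φ : (↥F → ℝ) →ᵇ ℝ := BoundedContinuousFunction.mkOfBound ⟨φf, φcont⟩ M
      (fun v w => by
        rw [Real.dist_eq]
        have h1 := φ01 v; have h2 := φ01 w
        rw [abs_le]; constructor <;> simp only [ContinuousMap.coe_mk] <;>
          [linarith [h1.1, h2.2]; linarith [h1.2, h2.1]]) with hφ
    have hφcoe : ∀ x : lp (fun _ : C => ℝ) 1,
        φ (fun j : ↥F => x (j : C)) = min |x i| M := fun x => rfl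
    have hten := hfdd F φ
    simp only [hφcoe] at hten
    -- integrability of the truncated coordinate
    have hintm : ∀ (m : Measure (lp (fun _ : C => ℝ) 1)) [IsProbabilityMeasure m],
        Integrable (fun x : lp (fun _ : C => ℝ) 1 => min |x i| M) m := by
      intro m _
      set ψ : lp (fun _ : C => ℝ) 1 →ᵇ ℝ := φ.compContinuous
        ⟨fun x => fun j : ↥F => x (j : C), by
          apply continuous_pi; intro j; exact aux_eval_continuous (j : C)⟩ with hψ
      exact ψ.integrable m
    have hb : ∀ n, ∫ x, min |x i| M ∂μ n ≤ (ENNReal.ofReal (u i)).toReal := by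
      intro n
      rw [integral_eq_lintegral_of_nonneg_ae
        (Filter.Eventually.of_forall fun x => le_min (abs_nonneg _) (Nat.cast_nonneg M))
        (hintm (μ n)).aestronglyMeasurable]
      apply ENNReal.toReal_mono ENNReal.ofReal_ne_top
      calc ∫⁻ x, ENNReal.ofReal (min |x i| M) ∂μ n
          ≤ ∫⁻ x, ENNReal.ofReal |x i| ∂μ n :=
            lintegral_mono fun x => ENNReal.ofReal_le_ofReal (min_le_left _ _)
        _ ≤ ENNReal.ofReal (u i) := hdomμ n i
    have hlim : ∫ x, min |x i| M ∂ν ≤ (ENNReal.ofReal (u i)).toReal :=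
      le_of_tendsto hten (Filter.Eventually.of_forall hb)
    have heq : ENNReal.ofReal (∫ x, min |x i| M ∂ν)
        = ∫⁻ x, ENNReal.ofReal (min |x i| M) ∂ν :=
      ofReal_integral_eq_lintegral_ofReal (hintm ν)
        (Filter.Eventually.of_forall fun x => le_min (abs_nonneg _) (Nat.cast_nonneg M))
    calc ∫⁻ x, ENNReal.ofReal (min |x i| M) ∂ν
        = ENNReal.ofReal (∫ x, min |x i| M ∂ν) := heq.symm
      _ ≤ ENNReal.ofReal ((ENNReal.ofReal (u i)).toReal) := ENNReal.ofReal_le_ofReal hlim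
      _ = ENNReal.ofReal (u i) := by
          rw [ENNReal.ofReal_toReal ENNReal.ofReal_ne_top]
  -- take the supremum over M
  have hmono : Monotone (fun (M : ℕ) => fun x : lp (fun _ : C => ℝ) 1 =>
      ENNReal.ofReal (min |x i| M)) := by
    intro M M' hMM' x
    apply ENNReal.ofReal_le_ofReal
    exact min_le_min le_rfl (by exact_mod_cast hMM')
  have hsup : ∀ x : lp (fun _ : C => ℝ) 1,
      (⨆ M : ℕ, ENNReal.ofReal (min |x i| M)) = ENNReal.ofReal |x i| := by
    intro x
    apply le_antisymm
    · exact iSup_le fun M => ENNReal.ofReal_le_ofReal (min_le_left _ _)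
    · have : ENNReal.ofReal |x i| = ENNReal.ofReal (min |x i| (⌈|x i|⌉₊ : ℕ)) := by
        rw [min_eq_left (Nat.le_ceil _)]
      rw [this]
      exact le_iSup (fun M : ℕ => ENNReal.ofReal (min |x i| M)) _
  have hlsup := lintegral_iSup (μ := ν)
    (fun M : ℕ => (ENNReal.measurable_ofReal.comp (hmeas.min measurable_const)))
    hmono
  calc ∫⁻ x, ENNReal.ofReal |x i| ∂ν
      = ∫⁻ x, ⨆ M : ℕ, ENNReal.ofReal (min |x i| M) ∂ν := by
        apply lintegral_congr; intro x; rw [hsup x]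
    _ = ⨆ M : ℕ, ∫⁻ x, ENNReal.ofReal (min |x i| M) ∂ν := hlsup
    _ ≤ ENNReal.ofReal (u i) := iSup_le key

end Stmt15Aux

/-- let `C` be countable, and let `X^n`, `Y` be random variables with values
in `ℓ¹(C)` (equipped with its Borel σ-algebra for the norm topology). If (i) the
finite-dimensional distributions of `X^n` converge to those of `Y`, and (ii) there exists
`u ∈ ℓ¹(C)` with `E(|X^n_i|) ≤ u_i` for all `n` and `i`, then `X^n` converges in distribution
to `Y` in the norm topology of `ℓ¹(C)`. -/
theorem stmt15 {C : Type*} [Countable C]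
    {Ω Ω' : Type*} [MeasurableSpace Ω] [MeasurableSpace Ω']
    (P : Measure Ω) [IsProbabilityMeasure P] (P' : Measure Ω') [IsProbabilityMeasure P']
    [MeasurableSpace (lp (fun _ : C => ℝ) 1)] [BorelSpace (lp (fun _ : C => ℝ) 1)]
    (X : ℕ → Ω → lp (fun _ : C => ℝ) 1) (Y : Ω' → lp (fun _ : C => ℝ) 1)
    (hXmeas : ∀ n, Measurable (X n)) (hYmeas : Measurable Y)
    (hfdd : ∀ F : Finset C, ∀ f : (↥F → ℝ) →ᵇ ℝ,
      Tendsto (fun n => ∫ ω, f (fun i : ↥F => (X n ω) (i : C)) ∂P) atTop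
        (𝓝 (∫ ω, f (fun i : ↥F => (Y ω) (i : C)) ∂P')))
    (u : C → ℝ) (hu : Summable u)
    (hdom : ∀ (n : ℕ) (i : C),
      ∫⁻ ω, ENNReal.ofReal |(X n ω) i| ∂P ≤ ENNReal.ofReal (u i)) :
    ∀ f : lp (fun _ : C => ℝ) 1 →ᵇ ℝ,
      Tendsto (fun n => ∫ ω, f (X n ω) ∂P) atTop (𝓝 (∫ ω, f (Y ω) ∂P')) := by
  classical
  set μ : ℕ → Measure (lp (fun _ : C => ℝ) 1) := fun n => P.map (X n) with hμ
  set ν : Measure (lp (fun _ : C => ℝ) 1) := P'.map Y with hν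
  haveI : ∀ n, IsProbabilityMeasure (μ n) :=
    fun n => Measure.isProbabilityMeasure_map (hXmeas n).aemeasurable
  haveI : IsProbabilityMeasure ν := Measure.isProbabilityMeasure_map hYmeas.aemeasurable
  -- transported hypotheses
  have hfdd' : ∀ F : Finset C, ∀ g : (↥F → ℝ) →ᵇ ℝ,
      Tendsto (fun n => ∫ x, g (fun i : ↥F => x (i : C)) ∂μ n) atTop
        (𝓝 (∫ x, g (fun i : ↥F => x (i : C)) ∂ν)) := by
    intro F g
    have hc : Continuous fun x : lp (fun _ : C => ℝ) 1 => g (fun i : ↥F => x (i : C)) := by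
      apply g.continuous.comp
      apply continuous_pi
      intro j
      exact aux_eval_continuous (j : C)
    have h1 : ∀ n, ∫ x, g (fun i : ↥F => x (i : C)) ∂μ n
        = ∫ ω, g (fun i : ↥F => (X n ω) (i : C)) ∂P := fun n =>
      integral_map (hXmeas n).aemeasurable hc.aestronglyMeasurable
    have h2 : ∫ x, g (fun i : ↥F => x (i : C)) ∂ν
        = ∫ ω, g (fun i : ↥F => (Y ω) (i : C)) ∂P' :=
      integral_map hYmeas.aemeasurable hc.aestronglyMeasurable
    simp only [h1, h2]
    exact hfdd F g
  have hdomμ : ∀ n i, ∫⁻ x, ENNReal.ofReal |x i| ∂(μ n) ≤ ENNReal.ofReal (u i) := by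
    intro n i
    have hm : Measurable fun x : lp (fun _ : C => ℝ) 1 => ENNReal.ofReal |x i| :=
      ((aux_eval_continuous i).measurable.abs).ennreal_ofReal
    rw [lintegral_map hm (hXmeas n)]
    exact hdom n i
  have hdomν := aux_domY μ ν hfdd' u hdomμ
  have hW : ∑' i, ENNReal.ofReal (u i) ≠ ⊤ := by
    have h1 : Summable (fun i => ‖u i‖₊) := by
      rw [← NNReal.summable_coe]
      simpa [Real.norm_eq_abs] using hu.abs
    have h2 : ∑' i, (‖u i‖₊ : ℝ≥0∞) ≠ ⊤ := ENNReal.tsum_coe_ne_top_iff_summable.mpr h1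
    apply ne_top_of_le_ne_top h2
    apply ENNReal.tsum_le_tsum
    intro i
    rw [← enorm_eq_nnnorm, Real.enorm_eq_ofReal_abs]
    exact ENNReal.ofReal_le_ofReal (le_abs_self _)
  -- portmanteau
  have hclosed : ∀ S : Set (lp (fun _ : C => ℝ) 1), IsClosed S →
      atTop.limsup (fun n => μ n S) ≤ ν S :=
    fun S hS => aux_stepB μ ν hfdd' u hW hdomμ hdomν S hS
  have hopen := (limsup_measure_closed_le_iff_liminf_measure_open_ge
    (μ := ν) (μs := μ) (L := atTop)).mp hclosed
  intro f
  have hfin : ∀ g : lp (fun _ : C => ℝ) 1 →ᵇ ℝ,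
      Tendsto (fun n => ∫ x, g x ∂μ n) atTop (𝓝 (∫ x, g x ∂ν)) := by
    intro g
    apply BoundedContinuousFunction.tendsto_integral_of_forall_integral_le_liminf_integral
    intro h h_nn
    exact integral_le_liminf_integral_of_forall_isOpen_measure_le_liminf_measure h_nn hopen
  have h1 : ∀ n, ∫ x, f x ∂μ n = ∫ ω, f (X n ω) ∂P := fun n =>
    integral_map (hXmeas n).aemeasurable f.continuous.aestronglyMeasurable
  have h2 : ∫ x, f x ∂ν = ∫ ω, f (Y ω) ∂P' :=
    integral_map hYmeas.aemeasurable f.continuous.aestronglyMeasurable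
  have := hfin f
  simpa only [h1, h2] using this
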